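/- Let q̄ = (q_1, q_2, ...) be an infinite sequence of probabilities such that for some 0 < l_1 < l_2 we have 0 < q_{l_1} < 1, q_{l_2} = 1, and q_l = 0 for all l ∉ {l_1, l_2}. Then the 0-1 law for L fails for M^n_{q̄}. -/

import Mathlib

open FirstOrder Filter

/-- The simple graph on `Fin n` determined by a boolean function on unordered pairs. -/
def graphOf {n : ℕ} (f : Sym2 (Fin n) → Bool) : SimpleGraph (Fin n) where
  Adj i j := i ≠ j ∧ f s(i, j)
  symm := by
    constructor
    intro i j h
    exact ⟨Ne.symm h.1, by rw [Sym2.eq_swap]; exact h.2⟩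
  loopless := by constructor; intro i h; exact h.1 rfl

/-- The probability that the pair `e` is an edge, given edge probabilities `p`
indexed by the distance between the endpoints. -/
noncomputable def edgeProb (p : ℕ → ℝ) {n : ℕ} (e : Sym2 (Fin n)) : ℝ :=
  Sym2.lift ⟨fun i j => p (Nat.dist i.val j.val),
    fun i j => by simp only [Nat.dist_comm]⟩ e

/-- The probability weight of a particular configuration of edges. -/
noncomputable def weight (p : ℕ → ℝ) {n : ℕ} (f : Sym2 (Fin n) → Bool) : ℝ :=
  ∏ e : Sym2 (Fin n),
    if e.IsDiag then (if f e then 0 else 1)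
    else (if f e then edgeProb p e else 1 - edgeProb p e)

open Classical in
/-- The probability that the random graph `M^n_{p̄}` (on vertex set `Fin n`,
representing `[n] = {1,…,n}`, where distinct vertices at distance `d` are joined
independently with probability `p d`) satisfies the event `E`. -/
noncomputable def probEvent (p : ℕ → ℝ) (n : ℕ) (E : SimpleGraph (Fin n) → Prop) : ℝ :=
  ∑ f : Sym2 (Fin n) → Bool, if E (graphOf f) then weight p f else 0

/-- The probability that `M^n_{p̄}` satisfies the first-order sentence `ψ`
in the language of graphs. -/
noncomputable def probSat (p : ℕ → ℝ) (n : ℕ) (ψ : Language.graph.Sentence) : ℝ :=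
  probEvent p n (fun G => @Language.Sentence.Realize _ _ G.structure ψ)

/-- `M^n_{p̄}` satisfies the 0-1 law for first order logic. -/
def ZeroOneLaw (p : ℕ → ℝ) : Prop :=
  ∀ ψ : Language.graph.Sentence, ∃ c : ℝ, (c = 0 ∨ c = 1) ∧
    Tendsto (fun n => probSat p n ψ) atTop (nhds c)

/-- `M^n_{p̄}` satisfies the convergence law for first order logic. -/
def ConvergenceLaw (p : ℕ → ℝ) : Prop :=
  ∀ ψ : Language.graph.Sentence, ∃ c : ℝ,
    Tendsto (fun n => probSat p n ψ) atTop (nhds c)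

/-- `M^n_{p̄}` satisfies the weak convergence law for first order logic. -/
def WeakConvergenceLaw (p : ℕ → ℝ) : Prop :=
  ∀ ψ : Language.graph.Sentence,
    limsup (fun n => probSat p n ψ) atTop - liminf (fun n => probSat p n ψ) atTop < 1

/-- `q̄ ∈ Gen₁(p̄)`: `q̄` is obtained from `p̄` by inserting zeros (indices start at 1). -/
def Gen1 (p q : ℕ → ℝ) : Prop :=
  ∃ f : ℕ → ℕ, (∀ i j, 1 ≤ i → i < j → f i < f j) ∧ (∀ i, 1 ≤ i → 1 ≤ f i) ∧
    (∀ i, 1 ≤ i → q (f i) = p i) ∧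
    (∀ l, 1 ≤ l → (∀ i, 1 ≤ i → f i ≠ l) → q l = 0)

/-- `q̄ ∈ Gen₂(p̄)`: `q̄` is obtained from `p̄` by decreasing entries. -/
def Gen2 (p q : ℕ → ℝ) : Prop :=
  ∀ l, 1 ≤ l → q l ∈ Set.Icc (0 : ℝ) (p l)

/-- `q̄ ∈ Gen₃(p̄)`: `q̄` is obtained from `p̄` by replacing some entries with zero. -/
def Gen3 (p q : ℕ → ℝ) : Prop :=
  ∀ l, 1 ≤ l → q l = 0 ∨ q l = p l

/-- The condition `lim_{n→∞} log(∏_{i=1}^n (1-p_i))/log n = 0`. -/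
def StarCondition (p : ℕ → ℝ) : Prop :=
  Tendsto (fun n : ℕ => Real.log (∏ i ∈ Finset.Icc 1 n, (1 - p i)) / Real.log n)
    atTop (nhds 0)


/- ===== auxiliary development ===== -/

set_option maxHeartbeats 1000000

open Language in
/-- The sentence "there exists a vertex of degree exactly one". -/
noncomputable def degOne : Language.graph.Sentence :=
  ∃' ∃' (Language.adj.boundedFormula₂ (&0) (&1) ⊓
    ∀' (Language.adj.boundedFormula₂ (&0) (&2) ⟹ Term.bdEqual (&2) (&1)))

theorem degOne_realize {V : Type*} (G : SimpleGraph V) :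
    (@Language.Sentence.Realize _ _ G.structure degOne) ↔
      ∃ x y : V, G.Adj x y ∧ ∀ z, G.Adj x z → z = y := by
  letI := G.structure
  simp [degOne, Language.Sentence.Realize, Language.Formula.Realize,
    Language.Relations.boundedFormula₂, Language.Relations.boundedFormula,
    Language.Term.bdEqual]
  rfl

lemma natdist_eq (a b : ℕ) : Nat.dist a b = a - b + (b - a) := rfl

/-- The individual factor of `weight`. -/
noncomputable def W (p : ℕ → ℝ) {n : ℕ} (e : Sym2 (Fin n)) (v : Bool) : ℝ :=
  if e.IsDiag then (if v then 0 else 1)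
  else (if v then edgeProb p e else 1 - edgeProb p e)

lemma weight_eq (p : ℕ → ℝ) {n : ℕ} (f : Sym2 (Fin n) → Bool) :
    weight p f = ∏ e : Sym2 (Fin n), W p e (f e) := rfl

lemma W_mk {n : ℕ} (p : ℕ → ℝ) (i j : Fin n) (hij : i ≠ j) (v : Bool) :
    W p s(i,j) v = if v then p (Nat.dist i.val j.val)
      else 1 - p (Nat.dist i.val j.val) := by
  simp [W, Sym2.mk_isDiag_iff, hij, edgeProb]

lemma W_sum {n : ℕ} (p : ℕ → ℝ) (e : Sym2 (Fin n)) : W p e true + W p e false = 1 := by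
  by_cases h : e.IsDiag <;> simp [W, h]

open Classical in
lemma sum_restrict {n : ℕ} (p : ℕ → ℝ) (T : Finset (Sym2 (Fin n))) (b : Bool) :
    (∑ f : Sym2 (Fin n) → Bool, if ∀ e ∈ T, f e = b then weight p f else 0)
      = ∏ e ∈ T, W p e b := by
  have key : ∀ f : Sym2 (Fin n) → Bool,
      (if ∀ e ∈ T, f e = b then weight p f else 0)
        = ∏ e : Sym2 (Fin n), (if e ∈ T ∧ f e ≠ b then 0 else W p e (f e)) := by
    intro f
    by_cases h : ∀ e ∈ T, f e = b
    · rw [if_pos h, weight_eq]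
      exact Finset.prod_congr rfl fun e _ =>
        (if_neg (fun hc => hc.2 (h e hc.1))).symm
    · rw [if_neg h]
      push_neg at h
      obtain ⟨e0, he0, hne⟩ := h
      refine (Finset.prod_eq_zero (Finset.mem_univ e0) ?_).symm
      exact if_pos ⟨he0, hne⟩
  rw [Finset.sum_congr rfl (fun f _ => key f)]
  have h3 : (∑ f : Sym2 (Fin n) → Bool,
        ∏ e : Sym2 (Fin n), (if e ∈ T ∧ f e ≠ b then (0:ℝ) else W p e (f e)))
      = ∏ e : Sym2 (Fin n), ∑ v : Bool, (if e ∈ T ∧ v ≠ b then (0:ℝ) else W p e v) :=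
    (Fintype.prod_sum (κ := fun _ : Sym2 (Fin n) => Bool)
      (f := fun e v => if e ∈ T ∧ v ≠ b then (0:ℝ) else W p e v)).symm
  rw [h3]
  have key2 : ∀ e : Sym2 (Fin n),
      (∑ v : Bool, if e ∈ T ∧ v ≠ b then (0:ℝ) else W p e v)
        = if e ∈ T then W p e b else 1 := by
    intro e
    rw [Fintype.sum_bool]
    by_cases he : e ∈ T
    · cases b <;> simp [he]
    · simp only [he, false_and, if_neg (by simp : ¬(False ∧ True)), if_false]
      rw [W_sum]
  rw [Finset.prod_congr rfl (fun e _ => key2 e), Finset.prod_ite_mem, Finset.univ_inter]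

lemma sum_weight {n : ℕ} (p : ℕ → ℝ) :
    (∑ f : Sym2 (Fin n) → Bool, weight p f) = 1 := by
  classical
  have := sum_restrict p (∅ : Finset (Sym2 (Fin n))) true
  simpa using this

lemma weight_nonneg {n : ℕ} {p : ℕ → ℝ} (hp : ∀ d, 0 ≤ p d ∧ p d ≤ 1)
    (f : Sym2 (Fin n) → Bool) : 0 ≤ weight p f := by
  rw [weight_eq]
  apply Finset.prod_nonneg
  intro e _
  induction e using Sym2.ind with
  | _ i j =>
    by_cases hij : i = j
    · subst hij
      simp only [W, if_pos (Sym2.mk_isDiag_iff.mpr rfl)]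
      split <;> norm_num
    · rw [W_mk p i j hij]
      rcases hp (Nat.dist i.val j.val) with ⟨h0, h1⟩
      split <;> linarith

open Classical in
lemma le_probEvent {n : ℕ} (q : ℕ → ℝ) (E : SimpleGraph (Fin n) → Prop)
    (T : Finset (Sym2 (Fin n))) (b : Bool)
    (hw : ∀ f : Sym2 (Fin n) → Bool, 0 ≤ weight q f)
    (hsupp : ∀ f : Sym2 (Fin n) → Bool, (∀ e ∈ T, f e = b) → weight q f ≠ 0 →
      E (graphOf f)) :
    ∏ e ∈ T, W q e b ≤ probEvent q n E := by
  rw [← sum_restrict q T b, probEvent]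
  apply Finset.sum_le_sum
  intro f _
  by_cases h1 : ∀ e ∈ T, f e = b
  · rw [if_pos h1]
    by_cases h2 : weight q f = 0
    · rw [h2]; split <;> simp
    · rw [if_pos (hsupp f h1 h2)]
  · rw [if_neg h1]
    split
    · exact hw f
    · exact le_refl 0

lemma probEvent_add_compl {n : ℕ} (q : ℕ → ℝ) (E : SimpleGraph (Fin n) → Prop) :
    probEvent q n E + probEvent q n (fun G => ¬ E G) = 1 := by
  classical
  rw [probEvent, probEvent, ← Finset.sum_add_distrib]
  refine Eq.trans (Finset.sum_congr rfl fun f _ => ?_) (sum_weight q)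
  by_cases h : E (graphOf f) <;> simp [h]

/-- The boundary index set. -/
def bSet (l1 l2 n : ℕ) : Finset ℕ :=
  Finset.range l2 ∪ Finset.Ico (n - l1 - l2) (n - l1)

lemma bSet_card (l1 l2 n : ℕ) : (bSet l1 l2 n).card ≤ 2 * l2 := by
  refine le_trans (Finset.card_union_le _ _) ?_
  rw [Finset.card_range, Nat.card_Ico]
  omega

lemma bSet_lt {l1 l2 n : ℕ} (h12 : l1 < l2) (hn : 2 * l2 ≤ n) :
    ∀ i ∈ bSet l1 l2 n, i + l1 < n := by
  intro i hi
  rcases Finset.mem_union.mp hi with h | h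
  · have := Finset.mem_range.mp h; omega
  · have := Finset.mem_Ico.mp h; omega

section Support

variable {q : ℕ → ℝ} {l1 l2 : ℕ} (h1 : 0 < l1) (h12 : l1 < l2)
  (hq1 : 0 < q l1 ∧ q l1 < 1) (hq2 : q l2 = 1)
  (hrest : ∀ l, l ≠ l1 → l ≠ l2 → q l = 0)

include h1 h12 hq1 hq2 hrest

lemma hq01 : ∀ d, 0 ≤ q d ∧ q d ≤ 1 := by
  intro d
  by_cases hd1 : d = l1
  · subst hd1; exact ⟨le_of_lt hq1.1, le_of_lt hq1.2⟩
  by_cases hd2 : d = l2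
  · subst hd2; rw [hq2]; norm_num
  · rw [hrest d hd1 hd2]; norm_num

lemma support_props {n : ℕ} (f : Sym2 (Fin n) → Bool) (hf : weight q f ≠ 0) :
    (∀ i j : Fin n, Nat.dist i.val j.val = l2 → f s(i,j) = true) ∧
    (∀ i j : Fin n, i ≠ j → f s(i,j) = true →
      Nat.dist i.val j.val = l1 ∨ Nat.dist i.val j.val = l2) := by
  rw [weight_eq] at hf
  have hfac : ∀ e : Sym2 (Fin n), W q e (f e) ≠ 0 :=
    fun e => Finset.prod_ne_zero_iff.mp hf e (Finset.mem_univ e)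
  constructor
  · intro i j hd
    have hij : i ≠ j := by
      intro h; subst h; rw [Nat.dist_self] at hd; omega
    have hW := hfac s(i,j)
    rw [W_mk q i j hij] at hW
    cases hfe : f s(i,j) with
    | true => rfl
    | false =>
        rw [hfe] at hW
        simp only [Bool.false_eq_true, if_false] at hW
        rw [hd, hq2] at hW
        simp at hW
  · intro i j hij hft
    have hW := hfac s(i,j)
    rw [W_mk q i j hij, hft, if_pos rfl] at hW
    by_contra hc
    push_neg at hc
    exact hW (hrest _ hc.1 hc.2)

lemma lower_bound {n : ℕ} (hn : 2 * l2 ≤ n) :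
    1 - q l1 ≤ probEvent q n
      (fun G => @Language.Sentence.Realize _ _ G.structure degOne) := by
  have h0n : 0 < n := by omega
  have hl1n : l1 < n := by omega
  have hl2n : l2 < n := by omega
  calc 1 - q l1
      = ∏ e ∈ {s((⟨0, h0n⟩ : Fin n), ⟨l1, hl1n⟩)}, W q e false := by
        rw [Finset.prod_singleton,
          W_mk q (⟨0, h0n⟩ : Fin n) ⟨l1, hl1n⟩ (Fin.ne_of_val_ne (by show (0:ℕ) ≠ l1; omega)) false]
        have hd : Nat.dist ((⟨0, h0n⟩ : Fin n)).val ((⟨l1, hl1n⟩ : Fin n)).val = l1 := by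
          show Nat.dist 0 l1 = l1
          exact Nat.dist_zero_left l1
        rw [hd]
        simp
    _ ≤ _ := by
        refine le_probEvent q _ _ false
          (weight_nonneg (hq01 h1 h12 hq1 hq2 hrest)) ?_
        intro f hfT hfne
        obtain ⟨hl2f, honly⟩ := support_props h1 h12 hq1 hq2 hrest f hfne
        have hf0 : f s((⟨0, h0n⟩ : Fin n), ⟨l1, hl1n⟩) = false :=
          hfT _ (Finset.mem_singleton_self _)
        rw [degOne_realize]
        refine ⟨⟨0, h0n⟩, ⟨l2, hl2n⟩,
          ⟨Fin.ne_of_val_ne (by show (0:ℕ) ≠ l2; omega), hl2f _ _ ?_⟩, ?_⟩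
        · show Nat.dist 0 l2 = l2
          exact Nat.dist_zero_left l2
        · intro z hz
          obtain ⟨hz1, hz2⟩ := hz
          have hd := honly _ z hz1 hz2
          have hz0 : Nat.dist ((⟨0, h0n⟩ : Fin n)).val z.val = z.val :=
            Nat.dist_zero_left z.val
          rw [hz0] at hd
          rcases hd with hd | hd
          · exfalso
            have hzeq : z = (⟨l1, hl1n⟩ : Fin n) := Fin.ext hd
            rw [hzeq] at hz2
            rw [hf0] at hz2
            exact Bool.false_ne_true hz2
          · exact Fin.ext hd

lemma upper_bound {n : ℕ} (hn : 2 * l2 ≤ n) :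
    probEvent q n (fun G => @Language.Sentence.Realize _ _ G.structure degOne)
      ≤ 1 - q l1 ^ (2 * l2) := by
  classical
  have hblt := bSet_lt h12 hn
  set T : Finset (Sym2 (Fin n)) := (bSet l1 l2 n).attach.image
    (fun i => s((⟨i.1, by have := hblt i.1 i.2; omega⟩ : Fin n),
      (⟨i.1 + l1, hblt i.1 i.2⟩ : Fin n))) with hT
  have hcard : T.card ≤ 2 * l2 := by
    refine le_trans (Finset.card_image_le) ?_
    rw [Finset.card_attach]
    exact bSet_card l1 l2 n
  have hprod : ∏ e ∈ T, W q e true = q l1 ^ T.card := by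
    rw [Finset.prod_congr rfl (fun e he => ?_), Finset.prod_const]
    obtain ⟨i, _, rfl⟩ := Finset.mem_image.mp he
    rw [W_mk q _ _ (Fin.ne_of_val_ne (by show i.1 ≠ i.1 + l1; omega)) true]
    have hd : Nat.dist i.1 (i.1 + l1) = l1 := by rw [natdist_eq]; omega
    show (if true then q (Nat.dist i.1 (i.1 + l1)) else _) = q l1
    rw [if_pos rfl, hd]
  have hle : q l1 ^ (2 * l2) ≤ probEvent q n
      (fun G => ¬ @Language.Sentence.Realize _ _ G.structure degOne) := by
    refine le_trans ?_ (le_trans (le_of_eq hprod.symm)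
      (le_probEvent q _ T true (weight_nonneg (hq01 h1 h12 hq1 hq2 hrest)) ?_))
    · exact pow_le_pow_of_le_one (le_of_lt hq1.1) (le_of_lt hq1.2) hcard
    · intro f hfT hfne
      obtain ⟨hl2f, _⟩ := support_props h1 h12 hq1 hq2 hrest f hfne
      have hmem : ∀ i (hi : i ∈ bSet l1 l2 n) (p1 : i < n) (p2 : i + l1 < n),
          f s((⟨i, p1⟩ : Fin n), (⟨i + l1, p2⟩ : Fin n)) = true := by
        intro i hi p1 p2
        exact hfT _ (Finset.mem_image.mpr ⟨⟨i, hi⟩, Finset.mem_attach _ _, rfl⟩)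
      have hdeg : ∀ x : Fin n, ∃ z1 z2 : Fin n,
          z1 ≠ z2 ∧ (graphOf f).Adj x z1 ∧ (graphOf f).Adj x z2 := by
        rintro ⟨m, hm⟩
        by_cases hc1 : m < l2
        · refine ⟨⟨m + l2, by omega⟩, ⟨m + l1, by omega⟩,
            Fin.ne_of_val_ne (by show m + l2 ≠ m + l1; omega),
            ⟨Fin.ne_of_val_ne (by show m ≠ m + l2; omega), hl2f _ _ ?_⟩,
            ⟨Fin.ne_of_val_ne (by show m ≠ m + l1; omega), ?_⟩⟩
          · show Nat.dist m (m + l2) = l2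
            rw [natdist_eq]; omega
          · exact hmem m (Finset.mem_union_left _ (Finset.mem_range.mpr hc1))
              hm (by omega)
        by_cases hc2 : m + l2 < n
        · have hml2 : l2 ≤ m := by omega
          refine ⟨⟨m - l2, by omega⟩, ⟨m + l2, by omega⟩,
            Fin.ne_of_val_ne (by show m - l2 ≠ m + l2; omega),
            ⟨Fin.ne_of_val_ne (by show m ≠ m - l2; omega), hl2f _ _ ?_⟩,
            ⟨Fin.ne_of_val_ne (by show m ≠ m + l2; omega), hl2f _ _ ?_⟩⟩
          · show Nat.dist m (m - l2) = l2
            rw [natdist_eq]; omega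
          · show Nat.dist m (m + l2) = l2
            rw [natdist_eq]; omega
        · have hml2 : l2 ≤ m := by omega
          have hml1 : l1 ≤ m := by omega
          have hmemI : m - l1 ∈ bSet l1 l2 n :=
            Finset.mem_union_right _ (Finset.mem_Ico.mpr ⟨by omega, by omega⟩)
          have p2 : (m - l1) + l1 < n := by omega
          have hedge := hmem (m - l1) hmemI (by omega) p2
          have e1 : (⟨(m - l1) + l1, p2⟩ : Fin n) = ⟨m, hm⟩ := Fin.ext (by show (m - l1) + l1 = m; omega)
          rw [e1] at hedge
          refine ⟨⟨m - l2, by omega⟩, ⟨m - l1, by omega⟩,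
            Fin.ne_of_val_ne (by show m - l2 ≠ m - l1; omega),
            ⟨Fin.ne_of_val_ne (by show m ≠ m - l2; omega), hl2f _ _ ?_⟩,
            ⟨Fin.ne_of_val_ne (by show m ≠ m - l1; omega), ?_⟩⟩
          · show Nat.dist m (m - l2) = l2
            rw [natdist_eq]; omega
          · rw [Sym2.eq_swap]
            exact hedge
      rw [degOne_realize]
      rintro ⟨x, y, hxy, huni⟩
      obtain ⟨z1, z2, hne, ha1, ha2⟩ := hdeg x
      exact hne ((huni z1 ha1).trans (huni z2 ha2).symm)
  have hc := probEvent_add_compl (n := n) q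
    (fun G => @Language.Sentence.Realize _ _ G.structure degOne)
  linarith

end Support

theorem statement_15 (q : ℕ → ℝ) (l1 l2 : ℕ) (h1 : 0 < l1) (h12 : l1 < l2)
    (hq1 : 0 < q l1 ∧ q l1 < 1) (hq2 : q l2 = 1)
    (hrest : ∀ l, l ≠ l1 → l ≠ l2 → q l = 0) :
    ¬ ZeroOneLaw q := by
  intro hzo
  obtain ⟨c, hc01, htend⟩ := hzo degOne
  have hev : ∀ᶠ n in atTop, probSat q n degOne ∈
      Set.Icc (1 - q l1) (1 - q l1 ^ (2 * l2)) := by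
    refine eventually_atTop.mpr ⟨2 * l2, fun n hn => ?_⟩
    exact ⟨lower_bound h1 h12 hq1 hq2 hrest hn,
      upper_bound h1 h12 hq1 hq2 hrest hn⟩
  have hge : 1 - q l1 ≤ c := ge_of_tendsto htend (hev.mono fun n h => h.1)
  have hle : c ≤ 1 - q l1 ^ (2 * l2) := le_of_tendsto htend (hev.mono fun n h => h.2)
  have hpow : 0 < q l1 ^ (2 * l2) := pow_pos hq1.1 _
  rcases hc01 with h | h <;> subst h
  · linarith [hq1.2]
  · linarith
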